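/- The lattice Γ_{r,s}(V) := { Σ m_i X_i + ½ Σ k_j Z_j : m_i, k_j ∈ ℤ } is a subgroup of the pseudo H-type group 𝔾_{r,s}(V) (with group law g*h = g + h + ½[g,h]) whenever {X_i, Z_j} is an integral basis, i.e., all structure constants c_{ij}^k ∈ {0, ±1}. -/
import Mathlib


open scoped BigOperators

/-- The group law `g * h = g + h + ½[g,h]` of a 2-step nilpotent Lie group identified with
its Lie algebra, where the bracket is given by structure constants `c`. -/
noncomputable def nilMul {m d : ℕ} (c : Fin m → Fin m → Fin d → ℝ)
    (g h : (Fin m → ℝ) × (Fin d → ℝ)) : (Fin m → ℝ) × (Fin d → ℝ) :=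
  (g.1 + h.1, g.2 + h.2 + fun k => (1 / 2 : ℝ) * ∑ i, ∑ j, c i j k * g.1 i * h.1 j)

/-- Membership in the standard integral lattice
`Γ = { Σ mᵢ Xᵢ + ½ Σ kⱼ Zⱼ : mᵢ, kⱼ ∈ ℤ }`. -/
def inLattice {m d : ℕ} (g : (Fin m → ℝ) × (Fin d → ℝ)) : Prop :=
  (∀ i, ∃ a : ℤ, g.1 i = a) ∧ (∀ k, ∃ a : ℤ, g.2 k = a / 2)

lemma skew_sum_zero {m d : ℕ} (c : Fin m → Fin m → Fin d → ℝ)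
    (hskew : ∀ i j k, c i j k = - c j i k) (x : Fin m → ℝ) (k : Fin d) :
    ∑ i, ∑ j, c i j k * x i * x j = 0 := by
  have h1 : ∑ i, ∑ j, c i j k * x i * x j
      = ∑ i, ∑ j, -(c j i k * x j * x i) := by
    apply Finset.sum_congr rfl; intro i _
    apply Finset.sum_congr rfl; intro j _
    rw [hskew i j k]; ring
  have h2 : ∑ i, ∑ j, -(c j i k * x j * x i)
      = -∑ i, ∑ j, c j i k * x j * x i := by
    simp [Finset.sum_neg_distrib]
  have h3 : ∑ i, ∑ j, c j i k * x j * x i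
      = ∑ i, ∑ j, c i j k * x i * x j := Finset.sum_comm
  have := h1.trans (h2.trans (by rw [h3]))
  linarith

/-- The lattice `Γ_{r,s}(V) = { Σ mᵢ Xᵢ + ½ Σ kⱼ Zⱼ : mᵢ, kⱼ ∈ ℤ }` is a subgroup of the
pseudo H-type group `𝔾_{r,s}(V)` (group law `g*h = g + h + ½[g,h]`) whenever `{Xᵢ, Zⱼ}`
is an integral basis, i.e. all structure constants `c_{ij}^k ∈ {0, ±1}`: it contains the
identity and is closed under the product and under inverses. -/
theorem statement19 {m d : ℕ}
    (c : Fin m → Fin m → Fin d → ℝ)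
    (hint : ∀ i j k, c i j k = 0 ∨ c i j k = 1 ∨ c i j k = -1)
    (hskew : ∀ i j k, c i j k = - c j i k) :
    inLattice ((0 : Fin m → ℝ), (0 : Fin d → ℝ)) ∧
    (∀ g h : (Fin m → ℝ) × (Fin d → ℝ),
      inLattice g → inLattice h → inLattice (nilMul c g h)) ∧
    (∀ g : (Fin m → ℝ) × (Fin d → ℝ), inLattice g →
      inLattice (-g) ∧
      nilMul c g (-g) = ((0 : Fin m → ℝ), (0 : Fin d → ℝ)) ∧
      nilMul c (-g) g = ((0 : Fin m → ℝ), (0 : Fin d → ℝ))) := by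
  have hcZ : ∀ i j k, ∃ n : ℤ, c i j k = n := by
    intro i j k
    rcases hint i j k with h | h | h
    · exact ⟨0, by simp [h]⟩
    · exact ⟨1, by simp [h]⟩
    · exact ⟨-1, by simp [h]⟩
  choose cz hcz using hcZ
  refine ⟨⟨fun i => ⟨0, by simp⟩, fun k => ⟨0, by simp⟩⟩, ?_, ?_⟩
  · intro g h hg hh
    choose a ha using hg.1
    choose b hb using hh.1
    choose p hp using hg.2
    choose q hq using hh.2
    constructor
    · intro i
      exact ⟨a i + b i, by simp [nilMul, ha, hb]⟩
    · intro k
      refine ⟨p k + q k + ∑ i, ∑ j, cz i j k * a i * b j, ?_⟩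
      have hsum : ∑ i, ∑ j, c i j k * g.1 i * h.1 j
          = ((∑ i, ∑ j, cz i j k * a i * b j : ℤ) : ℝ) := by
        push_cast
        exact Finset.sum_congr rfl fun i _ => Finset.sum_congr rfl fun j _ => by
          rw [ha, hb, hcz]
      simp only [nilMul, Pi.add_apply, hp, hq, hsum]
      push_cast
      ring
  · intro g hg
    choose a ha using hg.1
    choose p hp using hg.2
    refine ⟨⟨fun i => ⟨-(a i), by simp [ha]⟩, fun k => ⟨-(p k), by
      simp only [Prod.snd_neg, Pi.neg_apply, hp]; push_cast; ring⟩⟩, ?_, ?_⟩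
    · unfold nilMul
      ext k
      · simp
      · simp only [Prod.snd_neg, Prod.fst_neg, Pi.add_apply, Pi.neg_apply]
        simp [skew_sum_zero c hskew g.1 k]
    · unfold nilMul
      ext k
      · simp
      · simp only [Prod.snd_neg, Prod.fst_neg, Pi.add_apply, Pi.neg_apply]
        simp [skew_sum_zero c hskew g.1 k]
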